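/- If g : [0,∞) → ℝ is positive and decreasing with r ↦ r^{d-1} g(r) integrable on (0,∞), then for every ζ ∈ [−1/2, 1/2]^d and every c > 0, the sum over r ∈ ℤ^d of g(c‖ζ + r‖₂) is at least (2^d / (d^{d/2−1} 3^{d−1} c^d)) times the integral from 3d^{1/2}c/2 to ∞ of r^{d−1} g(r) dr. -/

import Mathlib

private lemma neg_one_pow_le_one' (e : ℕ) : ((-1 : ℤ)) ^ e ≤ 1 := by
  rcases Nat.even_or_odd e with h | h
  · rw [h.neg_one_pow]
  · rw [h.neg_one_pow]; omega

private lemma shell_low (n m : ℕ) :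
    ((n : ℤ) + 1) * 2 ^ (n + 1) * (m + 1) ^ n
      ≤ (2 * (m : ℤ) + 3) ^ (n + 1) - (2 * (m : ℤ) + 1) ^ (n + 1) := by
  set x : ℤ := 2 * (m : ℤ) + 2 with hx
  have h3 : (2 * (m : ℤ) + 3) = x + 1 := by ring
  have h1 : (2 * (m : ℤ) + 1) = x + (-1) := by ring
  have expand : (x + 1) ^ (n+1) - (x + (-1)) ^ (n+1)
      = ∑ j ∈ Finset.range (n + 2),
          (x ^ j * 1 ^ (n + 1 - j) * ((n+1).choose j)
            - x ^ j * (-1) ^ (n + 1 - j) * ((n+1).choose j)) := by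
    rw [add_pow, add_pow, ← Finset.sum_sub_distrib]
  have hterm : ∀ j ∈ Finset.range (n + 2),
      (0 : ℤ) ≤ x ^ j * 1 ^ (n + 1 - j) * ((n+1).choose j)
        - x ^ j * (-1) ^ (n + 1 - j) * ((n+1).choose j) := by
    intro j _
    have hx0 : (0 : ℤ) ≤ x := by positivity
    have h4 := neg_one_pow_le_one' (n + 1 - j)
    have h5 : (0:ℤ) ≤ x ^ j * ((n+1).choose j) := by positivity
    simp only [one_pow, mul_one]
    nlinarith [mul_nonneg h5 (by linarith : (0:ℤ) ≤ 1 - (-1)^(n+1-j))]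
  have hmem : n ∈ Finset.range (n + 2) := by simp
  have key := (Finset.single_le_sum hterm hmem).trans_eq expand.symm
  have hn1 : n + 1 - n = 1 := by omega
  rw [hn1] at key
  simp only [pow_one, one_pow, mul_one, Nat.choose_succ_self_right] at key
  have hxn : x ^ n = 2^n * ((m:ℤ)+1)^n := by
    rw [hx, show (2 * (m:ℤ) + 2) = 2 * ((m:ℤ)+1) by ring, mul_pow]
  rw [hxn] at key
  rw [h3, h1]
  rw [pow_succ]
  push_cast at key ⊢
  nlinarith [key]

private lemma shell_high (n m : ℕ) :
    (2 * (m : ℤ) + 3) ^ (n + 1) - (2 * (m : ℤ) + 1) ^ (n + 1)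
      ≤ 2 * ((n : ℤ) + 1) * 3 ^ n * (m + 1) ^ n := by
  have h := geom_sum₂_mul (2 * (m : ℤ) + 3) (2 * (m : ℤ) + 1) (n + 1)
  have h2 : (2 * (m : ℤ) + 3) - (2 * (m : ℤ) + 1) = 2 := by ring
  rw [h2] at h
  rw [← h]
  have hb : ∀ j ∈ Finset.range (n+1),
      (2 * (m : ℤ) + 3) ^ j * (2 * (m : ℤ) + 1) ^ (n + 1 - 1 - j) ≤ (3 * ((m:ℤ)+1)) ^ n := by
    intro j hj
    rw [Finset.mem_range] at hj
    have e1 : (2 * (m : ℤ) + 3) ^ j ≤ (3 * ((m:ℤ)+1)) ^ j :=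
      pow_le_pow_left₀ (by positivity) (by omega) j
    have e2 : (2 * (m : ℤ) + 1) ^ (n + 1 - 1 - j) ≤ (3 * ((m:ℤ)+1)) ^ (n + 1 - 1 - j) :=
      pow_le_pow_left₀ (by positivity) (by omega) _
    calc (2 * (m : ℤ) + 3) ^ j * (2 * (m : ℤ) + 1) ^ (n + 1 - 1 - j)
        ≤ (3 * ((m:ℤ)+1)) ^ j * (3 * ((m:ℤ)+1)) ^ (n + 1 - 1 - j) := by
          apply mul_le_mul e1 e2 (by positivity) (by positivity)
      _ = (3 * ((m:ℤ)+1)) ^ (j + (n + 1 - 1 - j)) := (pow_add _ _ _).symm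
      _ = (3 * ((m:ℤ)+1)) ^ n := by congr 1; omega
  have hsum := Finset.sum_le_card_nsmul _ _ _ hb
  simp only [Finset.card_range, nsmul_eq_mul] at hsum
  have : ((n:ℤ)+1) * (3 * ((m:ℤ)+1)) ^ n * 2 ≤ 2 * ((n : ℤ) + 1) * 3 ^ n * (m + 1) ^ n := by
    rw [mul_pow]; ring_nf; omega
  calc (∑ j ∈ Finset.range (n+1),
        (2 * (m : ℤ) + 3) ^ j * (2 * (m : ℤ) + 1) ^ (n + 1 - 1 - j)) * 2
      ≤ ((n:ℤ)+1) * (3 * ((m:ℤ)+1)) ^ n * 2 := by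
        have := mul_le_mul_of_nonneg_right hsum (by norm_num : (0:ℤ) ≤ 2)
        push_cast at this ⊢; linarith
    _ ≤ _ := this

open MeasureTheory

private lemma tile (F : ℝ → ℝ) (hF : IntegrableOn F (Set.Ioi 0)) (a : ℕ → ℝ)
    (h0 : 0 < a 0) (hmono : Monotone a) (M : ℕ) :
    ∑ j ∈ Finset.range M, ∫ r in Set.Ioc (a j) (a (j + 1)), F r
      = ∫ r in Set.Ioc (a 0) (a M), F r := by
  have hpos : ∀ j, 0 < a j := fun j => h0.trans_le (hmono (Nat.zero_le j))
  have hsub : ∀ j k, Set.Ioc (a j) (a k) ⊆ Set.Ioi 0 :=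
    fun j k x hx => (hpos j).trans hx.1
  induction M with
  | zero => simp
  | succ M ih =>
    rw [Finset.sum_range_succ, ih]
    rw [← setIntegral_union]
    · rw [Set.Ioc_union_Ioc_eq_Ioc (hmono (Nat.zero_le M)) (hmono (Nat.le_succ M))]
    · exact Set.Ioc_disjoint_Ioc_of_le le_rfl
    · exact measurableSet_Ioc
    · exact hF.mono_set (hsub 0 M)
    · exact hF.mono_set (hsub M (M+1))

set_option maxHeartbeats 1000000 in
theorem stmt4 (d : ℕ) (hd : 1 ≤ d) (g : ℝ → ℝ)
    (hpos : ∀ r : ℝ, 0 ≤ r → 0 < g r)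
    (hdec : ∀ r s : ℝ, 0 ≤ r → r ≤ s → g s ≤ g r)
    (hint : IntegrableOn (fun r : ℝ => r ^ (d - 1) * g r) (Set.Ioi 0))
    (ζ : Fin d → ℝ) (hζ : ∀ i, ζ i ∈ Set.Icc (-(1 / 2) : ℝ) (1 / 2))
    (c : ℝ) (hc : 0 < c) :
    (2 ^ d / ((d : ℝ) ^ ((d : ℝ) / 2 - 1) * 3 ^ (d - 1) * c ^ d)) *
        ∫ r in Set.Ioi (3 * Real.sqrt d * c / 2), r ^ (d - 1) * g r
      ≤ ∑' k : Fin d → ℤ, g (c * Real.sqrt (∑ i, (ζ i + (k i : ℝ)) ^ 2)) := by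
  obtain ⟨n, rfl⟩ : ∃ n, d = n + 1 := ⟨d - 1, (Nat.succ_pred_eq_of_pos hd).symm⟩
  simp only [Nat.add_sub_cancel] at hint ⊢
  -- basic abbreviations
  set X : ℝ := ((n + 1 : ℕ) : ℝ) with hX_def
  have hX1 : (1:ℝ) ≤ X := by rw [hX_def]; exact_mod_cast Nat.one_le_iff_ne_zero.mpr (by omega)
  have hX0 : (0:ℝ) < X := lt_of_lt_of_le one_pos hX1
  set sd : ℝ := Real.sqrt X with hsd_def
  have hsd1 : 1 ≤ sd := by rw [hsd_def]; exact Real.one_le_sqrt.mpr hX1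
  have hsd0 : 0 < sd := lt_of_lt_of_le one_pos hsd1
  set F : ℝ → ℝ := fun r => r ^ n * g r with hF_def
  set f : (Fin (n+1) → ℤ) → ℝ :=
    fun k => g (c * Real.sqrt (∑ i, (ζ i + (k i : ℝ)) ^ 2)) with hf_def
  have hq0 : ∀ k : Fin (n+1) → ℤ, 0 ≤ c * Real.sqrt (∑ i, (ζ i + (k i : ℝ)) ^ 2) :=
    fun k => mul_nonneg hc.le (Real.sqrt_nonneg _)
  have hf_pos : ∀ k, 0 < f k := fun k => hpos _ (hq0 k)
  set Mx : (Fin (n+1) → ℤ) → ℕ := fun k => Finset.univ.sup fun i => (k i).natAbs with hMx_def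
  have habs : ∀ (k : Fin (n+1) → ℤ) i, |((k i : ℤ) : ℝ)| ≤ (Mx k : ℝ) := by
    intro k i
    have h1 : (k i).natAbs ≤ Mx k := Finset.le_sup (f := fun i => (k i).natAbs) (Finset.mem_univ i)
    rw [← Int.cast_abs, Int.abs_eq_natAbs]
    exact_mod_cast h1
  have hζ' : ∀ i, |ζ i| ≤ 1/2 := fun i => abs_le.mpr ⟨(hζ i).1, (hζ i).2⟩
  -- upper bound on the norm
  have hA1 : ∀ k : Fin (n+1) → ℤ,
      Real.sqrt (∑ i, (ζ i + (k i : ℝ)) ^ 2) ≤ sd * ((Mx k : ℝ) + 1/2) := by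
    intro k
    have hb : (0:ℝ) ≤ (Mx k : ℝ) + 1/2 := by positivity
    have h1 : ∑ i, (ζ i + (k i : ℝ)) ^ 2 ≤ ∑ _i : Fin (n+1), ((Mx k : ℝ) + 1/2)^2 := by
      apply Finset.sum_le_sum
      intro i _
      have h2 : |ζ i + (k i : ℝ)| ≤ (Mx k : ℝ) + 1/2 := by
        calc |ζ i + (k i : ℝ)| ≤ |ζ i| + |((k i : ℤ) : ℝ)| := abs_add_le _ _
          _ ≤ 1/2 + (Mx k : ℝ) := add_le_add (hζ' i) (habs k i)
          _ = (Mx k : ℝ) + 1/2 := by ring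
      calc (ζ i + (k i : ℝ)) ^ 2 = |ζ i + (k i : ℝ)| ^ 2 := (sq_abs _).symm
        _ ≤ ((Mx k : ℝ) + 1/2) ^ 2 := by
            exact pow_le_pow_left₀ (abs_nonneg _) h2 2
    calc Real.sqrt (∑ i, (ζ i + (k i : ℝ)) ^ 2)
        ≤ Real.sqrt (∑ _i : Fin (n+1), ((Mx k : ℝ) + 1/2)^2) := Real.sqrt_le_sqrt h1
      _ = Real.sqrt (X * ((Mx k : ℝ) + 1/2)^2) := by
          rw [Finset.sum_const, Finset.card_univ, Fintype.card_fin, nsmul_eq_mul, hX_def]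
      _ = sd * ((Mx k : ℝ) + 1/2) := by
          rw [Real.sqrt_mul hX0.le, Real.sqrt_sq hb, hsd_def]
  -- lower bound on the norm
  have hA2 : ∀ k : Fin (n+1) → ℤ,
      (Mx k : ℝ) - 1/2 ≤ Real.sqrt (∑ i, (ζ i + (k i : ℝ)) ^ 2) := by
    intro k
    obtain ⟨i0, -, hi0⟩ := Finset.exists_mem_eq_sup Finset.univ Finset.univ_nonempty
      (fun i => (k i).natAbs)
    have h3 : |((k i0 : ℤ) : ℝ)| = (Mx k : ℝ) := by
      have h0 : Mx k = (k i0).natAbs := hi0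
      rw [h0, ← Int.cast_abs, Int.abs_eq_natAbs, Int.cast_natCast]
    have h4 : |((k i0 : ℤ) : ℝ)| ≤ |ζ i0 + (k i0 : ℝ)| + |ζ i0| := by
      calc |((k i0 : ℤ) : ℝ)| = |(ζ i0 + (k i0 : ℝ)) - ζ i0| := by ring_nf
        _ ≤ |ζ i0 + (k i0 : ℝ)| + |ζ i0| := abs_sub _ _
    have h5 : |ζ i0 + (k i0 : ℝ)| ≤ Real.sqrt (∑ i, (ζ i + (k i : ℝ)) ^ 2) := by
      rw [← Real.sqrt_sq_eq_abs]
      exact Real.sqrt_le_sqrt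
        (Finset.single_le_sum (fun i _ => sq_nonneg (ζ i + (k i : ℝ))) (Finset.mem_univ i0))
    have := hζ' i0
    linarith [h3 ▸ h4]
  -- boxes
  set A : ℕ → Finset (Fin (n+1) → ℤ) :=
    fun m => Finset.Icc (fun _ => -(m:ℤ)) (fun _ => (m:ℤ)) with hA_def
  have hAmem : ∀ m k, k ∈ A m ↔ Mx k ≤ m := by
    intro m k
    rw [hA_def]
    simp only [Finset.mem_Icc, Pi.le_def]
    constructor
    · rintro ⟨h1, h2⟩
      refine Finset.sup_le fun i _ => ?_
      have := h1 i; have := h2 i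
      omega
    · intro h
      constructor <;> intro i <;>
        · have h6 : (k i).natAbs ≤ m :=
            le_trans (Finset.le_sup (f := fun i => (k i).natAbs) (Finset.mem_univ i)) h
          omega
  have hAcard : ∀ m, (A m).card = (2*m+1)^(n+1) := by
    intro m
    rw [hA_def]
    rw [Pi.card_Icc]
    simp only [Int.card_Icc]
    rw [Finset.prod_const, Finset.card_univ, Fintype.card_fin]
    congr 1
    omega
  have hAsub : ∀ m, A m ⊆ A (m+1) :=
    fun m k hk => (hAmem _ _).2 (((hAmem _ _).1 hk).trans (Nat.le_succ m))
  have hcard_sdiff : ∀ m : ℕ, ((A (m+1) \ A m).card : ℤ)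
      = (2*(m:ℤ)+3)^(n+1) - (2*(m:ℤ)+1)^(n+1) := by
    intro m
    rw [Finset.card_sdiff_of_subset (hAsub m), hAcard, hAcard]
    have hle : (2*m+1)^(n+1) ≤ (2*(m+1)+1)^(n+1) :=
      Nat.pow_le_pow_left (by omega) _
    push_cast [Nat.cast_sub hle]
    ring_nf
  have hcard_low : ∀ m : ℕ, X * 2^(n+1) * ((m:ℝ)+1)^n ≤ (((A (m+1) \ A m).card : ℕ) : ℝ) := by
    intro m
    have h8 := shell_low n m
    have h9 : ((n:ℝ) + 1) * 2^(n+1) * ((m:ℝ)+1)^n ≤ (((A (m+1) \ A m).card : ℕ) : ℝ) := by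
      have := (hcard_sdiff m) ▸ h8
      exact_mod_cast this
    have hXn : X = (n:ℝ) + 1 := by rw [hX_def]; push_cast; ring
    rw [hXn]; exact h9
  have hcard_high : ∀ m : ℕ, (((A (m+1) \ A m).card : ℕ) : ℝ) ≤ 2 * X * 3^n * ((m:ℝ)+1)^n := by
    intro m
    have h8 := shell_high n m
    have h9 : (((A (m+1) \ A m).card : ℕ) : ℝ) ≤ 2 * ((n:ℝ)+1) * 3^n * ((m:ℝ)+1)^n := by
      have := (hcard_sdiff m) ▸ h8
      exact_mod_cast this
    have hXn : X = (n:ℝ) + 1 := by rw [hX_def]; push_cast; ring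
    rw [hXn]; exact h9
  -- shell bounds on f-sums
  have hshell_low : ∀ m : ℕ,
      X * 2^(n+1) * (((m:ℝ)+1)^n * g (c * sd * ((m:ℝ) + 3/2)))
        ≤ ∑ k ∈ A (m+1) \ A m, f k := by
    intro m
    have harg : (0:ℝ) ≤ c * sd * ((m:ℝ) + 3/2) := by positivity
    have hgm_pos : 0 < g (c * sd * ((m:ℝ) + 3/2)) := hpos _ harg
    have hptw : ∀ k ∈ A (m+1) \ A m, g (c * sd * ((m:ℝ) + 3/2)) ≤ f k := by
      intro k hk
      have hk1 : Mx k ≤ m + 1 := (hAmem _ _).1 (Finset.mem_sdiff.1 hk).1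
      have h10 : c * Real.sqrt (∑ i, (ζ i + (k i : ℝ)) ^ 2) ≤ c * sd * ((m:ℝ) + 3/2) := by
        have h11 := hA1 k
        have h12 : sd * ((Mx k : ℝ) + 1/2) ≤ sd * ((m:ℝ) + 3/2) := by
          have : (Mx k : ℝ) ≤ (m:ℝ) + 1 := by exact_mod_cast hk1
          nlinarith
        calc c * Real.sqrt (∑ i, (ζ i + (k i : ℝ)) ^ 2)
            ≤ c * (sd * ((Mx k : ℝ) + 1/2)) := by
              exact mul_le_mul_of_nonneg_left h11 hc.le
          _ = c * sd * ((Mx k : ℝ) + 1/2) := by ring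
          _ ≤ c * sd * ((m:ℝ) + 3/2) := by
              calc c * sd * ((Mx k : ℝ) + 1/2) = c * (sd * ((Mx k : ℝ) + 1/2)) := by ring
                _ ≤ c * (sd * ((m:ℝ) + 3/2)) := mul_le_mul_of_nonneg_left h12 hc.le
                _ = c * sd * ((m:ℝ) + 3/2) := by ring
      exact hdec _ _ (hq0 k) h10
    have hsum := Finset.card_nsmul_le_sum _ _ _ hptw
    rw [nsmul_eq_mul] at hsum
    calc X * 2^(n+1) * (((m:ℝ)+1)^n * g (c * sd * ((m:ℝ) + 3/2)))
        = (X * 2^(n+1) * ((m:ℝ)+1)^n) * g (c * sd * ((m:ℝ) + 3/2)) := by ring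
      _ ≤ (((A (m+1) \ A m).card : ℕ) : ℝ) * g (c * sd * ((m:ℝ) + 3/2)) :=
          mul_le_mul_of_nonneg_right (hcard_low m) hgm_pos.le
      _ ≤ ∑ k ∈ A (m+1) \ A m, f k := hsum
  have hshell_high : ∀ m : ℕ,
      ∑ k ∈ A (m+1) \ A m, f k ≤ 2 * X * 3^n * (((m:ℝ)+1)^n * g (c * ((m:ℝ)+1) / 2)) := by
    intro m
    have harg : (0:ℝ) ≤ c * ((m:ℝ)+1) / 2 := by positivity
    have hptw : ∀ k ∈ A (m+1) \ A m, f k ≤ g (c * ((m:ℝ)+1) / 2) := by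
      intro k hk
      rw [Finset.mem_sdiff] at hk
      have hk1 : Mx k ≤ m + 1 := (hAmem _ _).1 hk.1
      have hk2 : ¬ Mx k ≤ m := fun h => hk.2 ((hAmem _ _).2 h)
      have hkeq : Mx k = m + 1 := by omega
      have h13 : c * ((m:ℝ)+1) / 2 ≤ c * Real.sqrt (∑ i, (ζ i + (k i : ℝ)) ^ 2) := by
        have h14 := hA2 k
        rw [hkeq] at h14
        have h15 : ((m:ℝ)+1)/2 ≤ Real.sqrt (∑ i, (ζ i + (k i : ℝ)) ^ 2) := by
          have : ((m+1 : ℕ) : ℝ) = (m:ℝ) + 1 := by push_cast; ring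
          rw [this] at h14
          nlinarith [Nat.cast_nonneg (α := ℝ) m]
        calc c * ((m:ℝ)+1) / 2 = c * (((m:ℝ)+1)/2) := by ring
          _ ≤ c * Real.sqrt (∑ i, (ζ i + (k i : ℝ)) ^ 2) :=
              mul_le_mul_of_nonneg_left h15 hc.le
      exact hdec _ _ harg h13
    have hsum := Finset.sum_le_card_nsmul _ _ _ hptw
    rw [nsmul_eq_mul] at hsum
    calc ∑ k ∈ A (m+1) \ A m, f k
        ≤ (((A (m+1) \ A m).card : ℕ) : ℝ) * g (c * ((m:ℝ)+1) / 2) := hsum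
      _ ≤ (2 * X * 3^n * ((m:ℝ)+1)^n) * g (c * ((m:ℝ)+1) / 2) :=
          mul_le_mul_of_nonneg_right (hcard_high m) (hpos _ harg).le
      _ = 2 * X * 3^n * (((m:ℝ)+1)^n * g (c * ((m:ℝ)+1) / 2)) := by ring
  -- integral comparison on intervals
  have hFnn : ∀ r ∈ Set.Ioi (0:ℝ), 0 ≤ F r :=
    fun r hr => mul_nonneg (pow_nonneg (le_of_lt hr) n) (hpos r (le_of_lt hr)).le
  have hIlow : ∀ a b : ℝ, 0 < a → a ≤ b →
      (b - a) * (a ^ n * g b) ≤ ∫ r in Set.Ioc a b, F r := by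
    intro a b ha hab
    have hsub : Set.Ioc a b ⊆ Set.Ioi 0 := fun x hx => ha.trans hx.1
    have h16 : ∫ _r in Set.Ioc a b, (a ^ n * g b) = (b - a) * (a ^ n * g b) := by
      rw [setIntegral_const, Real.volume_real_Ioc_of_le hab, smul_eq_mul]
    rw [← h16]
    apply setIntegral_mono_on
    · exact integrableOn_const (by rw [Real.volume_Ioc]; exact ENNReal.ofReal_ne_top)
    · exact hint.mono_set hsub
    · exact measurableSet_Ioc
    · intro x hx
      have hx1 : a < x := hx.1
      have hx2 : x ≤ b := hx.2
      have : g b ≤ g x := hdec x b (by linarith) hx2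
      have h17 : a ^ n ≤ x ^ n := pow_le_pow_left₀ ha.le hx1.le n
      have h18 : 0 ≤ g b := (hpos b (by linarith)).le
      show a ^ n * g b ≤ x ^ n * g x
      exact mul_le_mul h17 this h18 (pow_nonneg (by linarith) n)
  have hIhigh : ∀ a b : ℝ, 0 < a → a ≤ b →
      (∫ r in Set.Ioc a b, F r) ≤ (b - a) * (b ^ n * g a) := by
    intro a b ha hab
    have hsub : Set.Ioc a b ⊆ Set.Ioi 0 := fun x hx => ha.trans hx.1
    have h16 : ∫ _r in Set.Ioc a b, (b ^ n * g a) = (b - a) * (b ^ n * g a) := by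
      rw [setIntegral_const, Real.volume_real_Ioc_of_le hab, smul_eq_mul]
    rw [← h16]
    apply setIntegral_mono_on
    · exact hint.mono_set hsub
    · exact integrableOn_const (by rw [Real.volume_Ioc]; exact ENNReal.ofReal_ne_top)
    · exact measurableSet_Ioc
    · intro x hx
      have hx1 : a < x := hx.1
      have hx2 : x ≤ b := hx.2
      have h19 : g x ≤ g a := hdec a x ha.le hx1.le
      have h17 : x ^ n ≤ b ^ n := pow_le_pow_left₀ (by linarith) hx2 n
      show x ^ n * g x ≤ b ^ n * g a
      exact mul_le_mul h17 h19 (hpos x (by linarith)).le (pow_nonneg (by linarith) n)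
  have hImono : ∀ a b a' : ℝ, 0 < a' → a' ≤ a →
      (∫ r in Set.Ioc a b, F r) ≤ ∫ r in Set.Ioi a', F r := by
    intro a b a' ha' haa'
    have hsub : Set.Ioi a' ⊆ Set.Ioi 0 := Set.Ioi_subset_Ioi ha'.le
    apply setIntegral_mono_set (hint.mono_set hsub)
    · filter_upwards [ae_restrict_mem measurableSet_Ioi] with x hx
      exact hFnn x (ha'.trans hx)
    · apply Filter.Eventually.of_forall
      intro x hx
      exact lt_of_le_of_lt haa' hx.1
  -- decomposition of box sums into shells
  have hA_decomp : ∀ M, ∑ k ∈ A M, f k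
      = (∑ k ∈ A 0, f k) + ∑ m ∈ Finset.range M, ∑ k ∈ A (m+1) \ A m, f k := by
    intro M
    induction M with
    | zero => simp
    | succ M ih =>
      rw [Finset.sum_range_succ, ← add_assoc, ← ih]
      have := Finset.sum_sdiff (f := f) (hAsub M)
      linarith
  have hA0 : ∑ k ∈ A 0, f k ≤ g 0 := by
    have hptw : ∀ k ∈ A 0, f k ≤ g 0 := fun k _ => hdec 0 _ le_rfl (hq0 k)
    have hsum := Finset.sum_le_card_nsmul _ _ _ hptw
    rw [nsmul_eq_mul, hAcard 0] at hsum
    simpa using hsum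
  -- uniform bound for the auxiliary series
  have hT2sum : ∀ M : ℕ, ∑ m ∈ Finset.range M, (((m:ℝ)+1)^n * g (c * ((m:ℝ)+1) / 2))
      ≤ g (c/2) + 2^n * (2/c)^(n+1) * ∫ r in Set.Ioi (c/2), F r := by
    have hInn : 0 ≤ ∫ r in Set.Ioi (c/2), F r :=
      setIntegral_nonneg measurableSet_Ioi (fun x hx => hFnn x (lt_trans (by positivity : (0:ℝ) < c/2) hx))
    intro M
    match M with
    | 0 =>
      simp only [Finset.range_zero, Finset.sum_empty]
      have := hpos (c/2) (by positivity)
      positivity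
    | (M+1) =>
      rw [Finset.sum_range_succ']
      have hstep : ∀ j : ℕ, ((j:ℝ)+1+1)^n * g (c * ((j:ℝ)+1+1) / 2)
          ≤ 2^n * (2/c)^(n+1) * ∫ r in Set.Ioc (c*((j:ℝ)+1)/2) (c*((j:ℝ)+1+1)/2), F r := by
        intro j
        have ha : (0:ℝ) < c*((j:ℝ)+1)/2 := by positivity
        have hab : c*((j:ℝ)+1)/2 ≤ c*((j:ℝ)+1+1)/2 := by nlinarith
        have h20 := hIlow (c*((j:ℝ)+1)/2) (c*((j:ℝ)+1+1)/2) ha hab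
        have hdiff : c*((j:ℝ)+1+1)/2 - c*((j:ℝ)+1)/2 = c/2 := by ring
        rw [hdiff] at h20
        have hgb : 0 < g (c * ((j:ℝ)+1+1) / 2) := hpos _ (by positivity)
        have h21 : ((j:ℝ)+1+1)^n ≤ 2^n * ((j:ℝ)+1)^n := by
          rw [← mul_pow]
          apply pow_le_pow_left₀ (by positivity)
          nlinarith [Nat.cast_nonneg (α := ℝ) j]
        have hKid : 2^n * (2/c)^(n+1) * ((c/2) * ((c*((j:ℝ)+1)/2)^n * g (c * ((j:ℝ)+1+1) / 2)))
            = 2^n * ((j:ℝ)+1)^n * g (c * ((j:ℝ)+1+1) / 2) := by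
          have h00 : (c*((j:ℝ)+1)/2)^n = (c/2)^n * ((j:ℝ)+1)^n := by
            rw [← mul_pow]; congr 1; ring
          have h01 : ((2:ℝ)/c)^(n+1) * (c/2)^(n+1) = 1 := by
            rw [← mul_pow]
            have : (2:ℝ)/c * (c/2) = 1 := by field_simp
            rw [this, one_pow]
          rw [h00]
          calc 2^n * (2/c)^(n+1) * ((c/2) * ((c/2)^n * ((j:ℝ)+1)^n * g (c * ((j:ℝ)+1+1) / 2)))
              = 2^n * ((j:ℝ)+1)^n * g (c * ((j:ℝ)+1+1) / 2) * ((2/c)^(n+1) * (c/2)^(n+1)) := by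
                ring
            _ = 2^n * ((j:ℝ)+1)^n * g (c * ((j:ℝ)+1+1) / 2) := by rw [h01, mul_one]
        have hgoal2 : c*((j:ℝ)+1+1)/2 = c * ((j:ℝ)+1+1) / 2 := by ring
        calc ((j:ℝ)+1+1)^n * g (c * ((j:ℝ)+1+1) / 2)
            ≤ 2^n * ((j:ℝ)+1)^n * g (c * ((j:ℝ)+1+1) / 2) :=
              mul_le_mul_of_nonneg_right h21 hgb.le
          _ = 2^n * (2/c)^(n+1) * ((c/2) * ((c*((j:ℝ)+1)/2)^n * g (c * ((j:ℝ)+1+1) / 2))) :=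
              hKid.symm
          _ ≤ 2^n * (2/c)^(n+1) * ∫ r in Set.Ioc (c*((j:ℝ)+1)/2) (c*((j:ℝ)+1+1)/2), F r := by
              apply mul_le_mul_of_nonneg_left _ (by positivity)
              calc (c/2) * ((c*((j:ℝ)+1)/2)^n * g (c * ((j:ℝ)+1+1) / 2))
                  = (c/2) * ((c*((j:ℝ)+1)/2)^n * g (c*((j:ℝ)+1+1)/2)) := by rw [hgoal2]
                _ ≤ _ := h20
      have hsum1 : ∑ j ∈ Finset.range M, (((j+1:ℕ):ℝ)+1)^n * g (c * (((j+1:ℕ):ℝ)+1) / 2)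
          ≤ ∑ j ∈ Finset.range M,
              2^n * (2/c)^(n+1) * ∫ r in Set.Ioc (c*((j:ℝ)+1)/2) (c*((j:ℝ)+1+1)/2), F r := by
        apply Finset.sum_le_sum
        intro j _
        have := hstep j
        push_cast
        push_cast at this
        exact this
      have htile : ∑ j ∈ Finset.range M, ∫ r in Set.Ioc (c*((j:ℝ)+1)/2) (c*((j:ℝ)+1+1)/2), F r
          = ∫ r in Set.Ioc (c*((0:ℕ)+1:ℝ)/2) (c*((M:ℝ)+1)/2), F r := by
        have h30 := tile F hint (fun j => c*((j:ℝ)+1)/2) (by positivity)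
          (fun x y hxy => by
            have h31 : (x:ℝ) ≤ (y:ℝ) := by exact_mod_cast hxy
            dsimp only
            nlinarith) M
        rw [← h30]
        apply Finset.sum_congr rfl
        intro j _
        congr 2
        push_cast
        ring
      have hmono2 : (∫ r in Set.Ioc (c*((0:ℕ)+1:ℝ)/2) (c*((M:ℝ)+1)/2), F r)
          ≤ ∫ r in Set.Ioi (c/2), F r := by
        apply hImono _ _ _ (by positivity)
        push_cast
        nlinarith
      have h40 : ((0:ℕ):ℝ) + 1 = 1 := by norm_num
      have hlast : (((0:ℕ):ℝ)+1)^n * g (c * (((0:ℕ):ℝ)+1) / 2) = g (c/2) := by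
        rw [h40]; norm_num
      have hKnn : (0:ℝ) ≤ 2^n * (2/c)^(n+1) := by positivity
      have h41 := mul_le_mul_of_nonneg_left hmono2 hKnn
      calc (∑ j ∈ Finset.range M, (((j+1:ℕ):ℝ)+1)^n * g (c * (((j+1:ℕ):ℝ)+1) / 2))
            + (((0:ℕ):ℝ)+1)^n * g (c * (((0:ℕ):ℝ)+1) / 2)
          ≤ (∑ j ∈ Finset.range M,
              2^n * (2/c)^(n+1) * ∫ r in Set.Ioc (c*((j:ℝ)+1)/2) (c*((j:ℝ)+1+1)/2), F r)
            + g (c/2) := by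
            rw [hlast]
            exact add_le_add_left hsum1 _
        _ = 2^n * (2/c)^(n+1) * (∫ r in Set.Ioc (c*((0:ℕ)+1:ℝ)/2) (c*((M:ℝ)+1)/2), F r)
            + g (c/2) := by rw [← Finset.mul_sum, htile]
        _ ≤ 2^n * (2/c)^(n+1) * (∫ r in Set.Ioi (c/2), F r) + g (c/2) := add_le_add_left h41 _
        _ = g (c/2) + 2^n * (2/c)^(n+1) * ∫ r in Set.Ioi (c/2), F r := by ring
  -- summability
  have hsummable : Summable f := by
    apply summable_of_sum_le (c := g 0 + 2*X*3^n *
        (g (c/2) + 2^n * (2/c)^(n+1) * ∫ r in Set.Ioi (c/2), F r))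
      (fun k => (hf_pos k).le)
    intro u
    have hsub : u ⊆ A (u.sup Mx) := fun k hk =>
      (hAmem _ _).2 (Finset.le_sup (f := Mx) hk)
    calc ∑ k ∈ u, f k
        ≤ ∑ k ∈ A (u.sup Mx), f k :=
          Finset.sum_le_sum_of_subset_of_nonneg hsub (fun k _ _ => (hf_pos k).le)
      _ = (∑ k ∈ A 0, f k) + ∑ m ∈ Finset.range (u.sup Mx), ∑ k ∈ A (m+1) \ A m, f k :=
          hA_decomp _
      _ ≤ g 0 + ∑ m ∈ Finset.range (u.sup Mx),
            2 * X * 3^n * (((m:ℝ)+1)^n * g (c * ((m:ℝ)+1) / 2)) :=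
          add_le_add hA0 (Finset.sum_le_sum fun m _ => hshell_high m)
      _ = g 0 + 2*X*3^n * ∑ m ∈ Finset.range (u.sup Mx),
            (((m:ℝ)+1)^n * g (c * ((m:ℝ)+1) / 2)) := by rw [Finset.mul_sum]
      _ ≤ g 0 + 2*X*3^n * (g (c/2) + 2^n * (2/c)^(n+1) * ∫ r in Set.Ioi (c/2), F r) := by
          have := hT2sum (u.sup Mx)
          have h70 : (0:ℝ) ≤ 2*X*3^n := by positivity
          nlinarith
  -- lower bound for tsum via partial sums
  have hTlow : ∀ M : ℕ,
      X * 2^(n+1) * ∑ m ∈ Finset.range M, (((m:ℝ)+1)^n * g (c * sd * ((m:ℝ) + 3/2)))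
        ≤ ∑' k, f k := by
    intro M
    calc X * 2^(n+1) * ∑ m ∈ Finset.range M, (((m:ℝ)+1)^n * g (c * sd * ((m:ℝ) + 3/2)))
        = ∑ m ∈ Finset.range M,
            X * 2^(n+1) * (((m:ℝ)+1)^n * g (c * sd * ((m:ℝ) + 3/2))) := Finset.mul_sum _ _ _
      _ ≤ ∑ m ∈ Finset.range M, ∑ k ∈ A (m+1) \ A m, f k :=
          Finset.sum_le_sum fun m _ => hshell_low m
      _ ≤ (∑ k ∈ A 0, f k) + ∑ m ∈ Finset.range M, ∑ k ∈ A (m+1) \ A m, f k :=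
          le_add_of_nonneg_left (Finset.sum_nonneg fun k _ => (hf_pos k).le)
      _ = ∑ k ∈ A M, f k := (hA_decomp M).symm
      _ ≤ ∑' k, f k := Summable.sum_le_tsum _ (fun k _ => (hf_pos k).le) hsummable
  -- integral upper bound
  have hIntM : ∀ M : ℕ,
      (∫ r in Set.Ioc (c * sd * (3/2)) (c * sd * ((M:ℝ) + 3/2)), F r)
        ≤ (c*sd)^(n+1) * 3^n
            * ∑ m ∈ Finset.range M, (((m:ℝ)+1)^n * g (c * sd * ((m:ℝ) + 3/2))) := by
    intro M
    have htile2 : ∑ j ∈ Finset.range M,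
          ∫ r in Set.Ioc (c * sd * ((j:ℝ) + 3/2)) (c * sd * ((j:ℝ) + 1 + 3/2)), F r
        = ∫ r in Set.Ioc (c * sd * (3/2)) (c * sd * ((M:ℝ) + 3/2)), F r := by
      have h30 := tile F hint (fun j => c * sd * ((j:ℝ) + 3/2)) (by positivity)
        (fun x y hxy => by
          have h31 : (x:ℝ) ≤ (y:ℝ) := by exact_mod_cast hxy
          dsimp only
          have h31' := mul_le_mul_of_nonneg_left
            (by linarith : (x:ℝ)+3/2 ≤ (y:ℝ)+3/2) (by positivity : (0:ℝ) ≤ c*sd)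
          linarith) M
      simp only [Nat.cast_zero, zero_add] at h30
      rw [← h30]
      apply Finset.sum_congr rfl
      intro j _
      congr 2
      push_cast
      ring
    have hpiece : ∀ j : ℕ,
        (∫ r in Set.Ioc (c * sd * ((j:ℝ) + 3/2)) (c * sd * ((j:ℝ) + 1 + 3/2)), F r)
          ≤ (c*sd)^(n+1) * 3^n * (((j:ℝ)+1)^n * g (c * sd * ((j:ℝ) + 3/2))) := by
      intro j
      have ha : (0:ℝ) < c * sd * ((j:ℝ) + 3/2) := by positivity
      have hab : c * sd * ((j:ℝ) + 3/2) ≤ c * sd * ((j:ℝ) + 1 + 3/2) := by nlinarith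
      have h33 := hIhigh _ _ ha hab
      have hdiff : c * sd * ((j:ℝ) + 1 + 3/2) - c * sd * ((j:ℝ) + 3/2) = c * sd := by ring
      rw [hdiff] at h33
      have hgj : 0 < g (c * sd * ((j:ℝ) + 3/2)) := hpos _ ha.le
      have h34 : (c * sd * ((j:ℝ) + 1 + 3/2))^n ≤ (c*sd)^n * (3 * ((j:ℝ)+1))^n := by
        rw [← mul_pow]
        apply pow_le_pow_left₀ (by positivity)
        nlinarith [Nat.cast_nonneg (α := ℝ) j]
      calc (∫ r in Set.Ioc (c * sd * ((j:ℝ) + 3/2)) (c * sd * ((j:ℝ) + 1 + 3/2)), F r)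
          ≤ c * sd * ((c * sd * ((j:ℝ) + 1 + 3/2))^n * g (c * sd * ((j:ℝ) + 3/2))) := h33
        _ ≤ c * sd * ((c*sd)^n * (3 * ((j:ℝ)+1))^n * g (c * sd * ((j:ℝ) + 3/2))) := by
            apply mul_le_mul_of_nonneg_left _ (by positivity)
            exact mul_le_mul_of_nonneg_right h34 hgj.le
        _ = (c*sd)^(n+1) * 3^n * (((j:ℝ)+1)^n * g (c * sd * ((j:ℝ) + 3/2))) := by
            rw [mul_pow 3, pow_succ]
            ring
    calc (∫ r in Set.Ioc (c * sd * (3/2)) (c * sd * ((M:ℝ) + 3/2)), F r)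
        = ∑ j ∈ Finset.range M,
            ∫ r in Set.Ioc (c * sd * ((j:ℝ) + 3/2)) (c * sd * ((j:ℝ) + 1 + 3/2)), F r :=
          htile2.symm
      _ ≤ ∑ j ∈ Finset.range M,
            (c*sd)^(n+1) * 3^n * (((j:ℝ)+1)^n * g (c * sd * ((j:ℝ) + 3/2))) :=
          Finset.sum_le_sum fun j _ => hpiece j
      _ = (c*sd)^(n+1) * 3^n
            * ∑ m ∈ Finset.range M, (((m:ℝ)+1)^n * g (c * sd * ((m:ℝ) + 3/2))) := by
          rw [Finset.mul_sum]
  -- pass to the limit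
  have hlim : (∫ r in Set.Ioi (c * sd * (3/2)), F r)
      ≤ (c*sd)^(n+1) * 3^n / (X * 2^(n+1)) * ∑' k, f k := by
    have hb : Filter.Tendsto (fun M : ℕ => c * sd * ((M:ℝ) + 3/2)) Filter.atTop Filter.atTop := by
      apply Filter.Tendsto.const_mul_atTop (by positivity : (0:ℝ) < c * sd)
      apply Filter.tendsto_atTop_add_const_right
      exact tendsto_natCast_atTop_atTop
    have hR0 : (0:ℝ) < c * sd * (3/2) := by positivity
    have hIoiR : IntegrableOn F (Set.Ioi (c * sd * (3/2))) :=
      hint.mono_set (Set.Ioi_subset_Ioi hR0.le)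
    have hlim0 := MeasureTheory.intervalIntegral_tendsto_integral_Ioi _ hIoiR hb
    apply le_of_tendsto hlim0
    apply Filter.Eventually.of_forall
    intro M
    have hle : c * sd * (3/2) ≤ c * sd * ((M:ℝ) + 3/2) := by
      nlinarith [Nat.cast_nonneg (α := ℝ) M]
    rw [intervalIntegral.integral_of_le hle]
    have h60 : ∑ m ∈ Finset.range M, (((m:ℝ)+1)^n * g (c * sd * ((m:ℝ) + 3/2)))
        ≤ (∑' k, f k) / (X * 2^(n+1)) := by
      rw [le_div_iff₀ (by positivity)]
      calc (∑ m ∈ Finset.range M, (((m:ℝ)+1)^n * g (c * sd * ((m:ℝ) + 3/2)))) * (X * 2^(n+1))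
          = X * 2^(n+1) * ∑ m ∈ Finset.range M, (((m:ℝ)+1)^n * g (c * sd * ((m:ℝ) + 3/2))) := by
            ring
        _ ≤ ∑' k, f k := hTlow M
    calc (∫ r in Set.Ioc (c * sd * (3/2)) (c * sd * ((M:ℝ) + 3/2)), F r)
        ≤ (c*sd)^(n+1) * 3^n
            * ∑ m ∈ Finset.range M, (((m:ℝ)+1)^n * g (c * sd * ((m:ℝ) + 3/2))) := hIntM M
      _ ≤ (c*sd)^(n+1) * 3^n * ((∑' k, f k) / (X * 2^(n+1))) :=
          mul_le_mul_of_nonneg_left h60 (by positivity)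
      _ = (c*sd)^(n+1) * 3^n / (X * 2^(n+1)) * ∑' k, f k := by ring
  -- conclusion
  have hR : (3:ℝ) * sd * c / 2 = c * sd * (3/2) := by ring
  rw [hR]
  have hrp : (0:ℝ) < X ^ (X/2 - 1) := Real.rpow_pos_of_pos hX0 _
  have hC0 : (0:ℝ) < 2^(n+1) / (X ^ (X/2 - 1) * 3^n * c^(n+1)) := by positivity
  have hsd_pow : sd^(n+1) = X ^ ((X:ℝ)/2) := by
    rw [hsd_def, Real.sqrt_eq_rpow, ← Real.rpow_natCast (X ^ ((1:ℝ)/2)) (n+1),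
      ← Real.rpow_mul hX0.le]
    congr 1
    rw [hX_def]
    push_cast
    ring
  have hXX : X ^ (X/2 - 1) * X = X ^ (X/2) := by
    have h80 := Real.rpow_add hX0 (X/2 - 1) 1
    rw [Real.rpow_one] at h80
    rw [← h80]
    congr 1
    ring
  have hconst : (2^(n+1) / (X ^ (X/2 - 1) * 3^n * c^(n+1)))
      * ((c*sd)^(n+1) * 3^n / (X * 2^(n+1))) = 1 := by
    have h81 : (2^(n+1) / (X ^ (X/2 - 1) * 3^n * c^(n+1)))
        * ((c*sd)^(n+1) * 3^n / (X * 2^(n+1)))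
        = (2^(n+1) * (c^(n+1) * (X ^ ((X:ℝ)/2)) * 3^n))
            / ((X ^ (X/2 - 1) * 3^n * c^(n+1)) * (X * 2^(n+1))) := by
      rw [mul_pow, hsd_pow]
      ring
    rw [h81, div_eq_one_iff_eq (by positivity)]
    rw [← hXX]
    ring
  calc (2^(n+1) / (X ^ (X/2 - 1) * 3^n * c^(n+1))) * ∫ r in Set.Ioi (c * sd * (3/2)), F r
      ≤ (2^(n+1) / (X ^ (X/2 - 1) * 3^n * c^(n+1)))
          * ((c*sd)^(n+1) * 3^n / (X * 2^(n+1)) * ∑' k, f k) :=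
        mul_le_mul_of_nonneg_left hlim hC0.le
    _ = ((2^(n+1) / (X ^ (X/2 - 1) * 3^n * c^(n+1)))
          * ((c*sd)^(n+1) * 3^n / (X * 2^(n+1)))) * ∑' k, f k := by ring
    _ = ∑' k, f k := by rw [hconst, one_mul]
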